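/- Assume Condition (C) and let ε > 0. Then there exist δ ∈ (0,1) and κ > 0 such that for every u ∈ ℝ^N with nonnegative entries and every X ∈ ℝ^N, ⟨X, (J+δI)A^ε(u)X⟩ ≥ κ‖X‖₂². -/

import Mathlib

open Finset Matrix

/-- `B^ε_n(u) = (ε + f(n) Σ_k u_k) / (ε + Σ_k f(k) u_k)`. -/
noncomputable def Bv (N : ℕ) (f : Fin N → ℝ) (ε : ℝ) (u : Fin N → ℝ) (n : Fin N) : ℝ :=
  (ε + f n * ∑ k, u k) / (ε + ∑ k, f k * u k)

/-- The matrix `A^ε(u)`. -/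
noncomputable def Amat (N : ℕ) (f : Fin N → ℝ) (ε : ℝ) (u : Fin N → ℝ) :
    Matrix (Fin N) (Fin N) ℝ :=
  Matrix.of fun n k =>
    if n = k then
      Bv N f ε u n + u n * (f n * ∑ l, (f l - f n) * u l) / (ε + ∑ l, f l * u l) ^ 2
    else
      u n * (ε * (f n - f k) + f n * ∑ l, (f l - f k) * u l) / (ε + ∑ l, f l * u l) ^ 2

/-- `f_max`. -/
noncomputable def fmax (N : ℕ) (f : Fin N → ℝ) : ℝ := ⨆ n, f n

/-- `f_min`. -/
noncomputable def fmin (N : ℕ) (f : Fin N → ℝ) : ℝ := ⨅ n, f n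

/-- `f̄ = (1/N) Σ_n f(n)`. -/
noncomputable def fbar (N : ℕ) (f : Fin N → ℝ) : ℝ := (∑ n, f n) / N

/-- `β(f) = (f_max − f_min)/f_min + (1/f_min)√(Σ_n (f(n) − f̄)²)`. -/
noncomputable def betaf (N : ℕ) (f : Fin N → ℝ) : ℝ :=
  (fmax N f - fmin N f) / fmin N f +
    (1 / fmin N f) * Real.sqrt (∑ n, (f n - fbar N f) ^ 2)

/-- `κ₀ = (1/2)[N + 1 − max_k √((Σ_{n≠k} f(n))(Σ_{n≠k} 1/f(n)))]`. -/
noncomputable def kappa0 (N : ℕ) (f : Fin N → ℝ) : ℝ :=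
  (1 / 2) * (N + 1 -
    ⨆ k : Fin N, Real.sqrt ((∑ n ∈ univ.erase k, f n) * ∑ n ∈ univ.erase k, (f n)⁻¹))


/-- The all-ones matrix `J`. -/
def Jmat (N : ℕ) : Matrix (Fin N) (Fin N) ℝ := Matrix.of fun _ _ => (1 : ℝ)

private lemma sum_sub_mul (N : ℕ) (f u : Fin N → ℝ) (c : ℝ) :
    ∑ l, (f l - c) * u l = (∑ l, f l * u l) - c * ∑ l, u l := by
  simp [sub_mul, Finset.sum_sub_distrib, Finset.mul_sum]

private lemma Amat_eq (N : ℕ) (f : Fin N → ℝ) (ε : ℝ) (u : Fin N → ℝ) (n k : Fin N) :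
    Amat N f ε u n k = (if n = k then Bv N f ε u n else 0) +
      u n * (ε * (f n - f k) + f n * ((∑ l, f l * u l) - f k * ∑ l, u l)) /
        (ε + ∑ l, f l * u l) ^ 2 := by
  rcases eq_or_ne n k with h | h
  · subst h
    simp only [Amat, Matrix.of_apply, eq_self_iff_true, if_true, sum_sub_mul]
    ring
  · simp only [Amat, Matrix.of_apply, if_neg h, sum_sub_mul]
    ring

private lemma colsum (N : ℕ) (f : Fin N → ℝ) (ε : ℝ) (u : Fin N → ℝ)
    (hS : ε + ∑ l, f l * u l ≠ 0) (k : Fin N) :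
    ∑ n, Amat N f ε u n k = 1 := by
  have key : ∑ n, u n * (ε * (f n - f k) + f n * ((∑ l, f l * u l) - f k * ∑ l, u l))
      = (ε + ∑ l, f l * u l) * ((∑ l, f l * u l) - f k * ∑ l, u l) := by
    have h1 : ∀ n : Fin N, u n * (ε * (f n - f k) + f n * ((∑ l, f l * u l) - f k * ∑ l, u l))
        = (ε + ((∑ l, f l * u l) - f k * ∑ l, u l)) * (f n * u n) - (ε * f k) * u n := by
      intro n; ring
    rw [Finset.sum_congr rfl fun n _ => h1 n, Finset.sum_sub_distrib, ← Finset.mul_sum,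
      ← Finset.mul_sum]
    ring
  rw [Finset.sum_congr rfl fun n _ => Amat_eq N f ε u n k]
  rw [Finset.sum_add_distrib, Finset.sum_ite_eq' Finset.univ k (fun n => Bv N f ε u n)]
  simp only [Finset.mem_univ, if_pos]
  have : ∑ n, u n * (ε * (f n - f k) + f n * ((∑ l, f l * u l) - f k * ∑ l, u l)) /
      (ε + ∑ l, f l * u l) ^ 2
      = (∑ n, u n * (ε * (f n - f k) + f n * ((∑ l, f l * u l) - f k * ∑ l, u l))) /
      (ε + ∑ l, f l * u l) ^ 2 := by
    rw [Finset.sum_div]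
  rw [this, key, Bv]
  field_simp
  ring

private lemma row_eq (N : ℕ) (f : Fin N → ℝ) (ε : ℝ) (u X : Fin N → ℝ) (n : Fin N) :
    ∑ k, Amat N f ε u n k * X k
      = Bv N f ε u n * X n +
        u n * ((f n * (ε + ∑ l, f l * u l)) * (∑ k, X k)
          - (ε + f n * ∑ l, u l) * (∑ k, f k * X k)) / (ε + ∑ l, f l * u l) ^ 2 := by
  have key : ∑ k, (ε * (f n - f k) + f n * ((∑ l, f l * u l) - f k * ∑ l, u l)) * X k
      = (f n * (ε + ∑ l, f l * u l)) * (∑ k, X k)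
        - (ε + f n * ∑ l, u l) * (∑ k, f k * X k) := by
    have h1 : ∀ k : Fin N, (ε * (f n - f k) + f n * ((∑ l, f l * u l) - f k * ∑ l, u l)) * X k
        = (f n * (ε + ∑ l, f l * u l)) * X k - (ε + f n * ∑ l, u l) * (f k * X k) := by
      intro k; ring
    rw [Finset.sum_congr rfl fun k _ => h1 k, Finset.sum_sub_distrib, ← Finset.mul_sum,
      ← Finset.mul_sum]
  rw [Finset.sum_congr rfl fun k _ => congrArg (· * X k) (Amat_eq N f ε u n k)]
  have h2 : ∀ k : Fin N, ((if n = k then Bv N f ε u n else 0) +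
      u n * (ε * (f n - f k) + f n * ((∑ l, f l * u l) - f k * ∑ l, u l)) /
        (ε + ∑ l, f l * u l) ^ 2) * X k
      = (if n = k then Bv N f ε u n * X k else 0) +
        (u n / (ε + ∑ l, f l * u l) ^ 2) *
          ((ε * (f n - f k) + f n * ((∑ l, f l * u l) - f k * ∑ l, u l)) * X k) := by
    intro k; rcases eq_or_ne n k with h | h <;> simp [h] <;> ring
  rw [Finset.sum_congr rfl fun k _ => h2 k, Finset.sum_add_distrib, ← Finset.mul_sum,
    Finset.sum_ite_eq Finset.univ n (fun k => Bv N f ε u n * X k), key]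
  simp only [Finset.mem_univ, if_pos]
  ring

private lemma qf_eq (N : ℕ) (f : Fin N → ℝ) (ε : ℝ) (u X : Fin N → ℝ)
    (hS : ε + ∑ l, f l * u l ≠ 0) :
    X ⬝ᵥ (Amat N f ε u *ᵥ X)
      = (∑ n, Bv N f ε u n * X n ^ 2)
        + ((∑ k, X k) * ∑ n, u n * f n * X n) / (ε + ∑ l, f l * u l)
        - ((∑ k, f k * X k) * ∑ n, u n * (ε + f n * ∑ l, u l) * X n) /
            (ε + ∑ l, f l * u l) ^ 2 := by
  simp only [dotProduct, Matrix.mulVec]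
  rw [Finset.sum_congr rfl fun n _ => congrArg (X n * ·) (row_eq N f ε u X n)]
  have h1 : ∀ n : Fin N, X n * (Bv N f ε u n * X n +
      u n * ((f n * (ε + ∑ l, f l * u l)) * (∑ k, X k)
        - (ε + f n * ∑ l, u l) * (∑ k, f k * X k)) / (ε + ∑ l, f l * u l) ^ 2)
      = Bv N f ε u n * X n ^ 2
        + (((ε + ∑ l, f l * u l) * ∑ k, X k) / (ε + ∑ l, f l * u l) ^ 2) *
            (u n * f n * X n)
        - ((∑ k, f k * X k) / (ε + ∑ l, f l * u l) ^ 2) *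
            (u n * (ε + f n * ∑ l, u l) * X n) := by
    intro n; ring
  rw [Finset.sum_congr rfl fun n _ => h1 n, Finset.sum_sub_distrib, Finset.sum_add_distrib,
    ← Finset.mul_sum, ← Finset.mul_sum]
  have hS2 : (ε + ∑ l, f l * u l) ^ 2 ≠ 0 := pow_ne_zero _ hS
  generalize (∑ n, u n * (ε + f n * ∑ l, u l) * X n) = Q
  field_simp

private lemma quad_aux (t n d a mm : ℝ) (ht : 0 ≤ t) (hn : 0 ≤ n) (hd : 0 < d)
    (hda : d * mm ^ 2 ≤ a) :
    d * a / 2 * n ^ 2 ≤ t ^ 2 + d * (a * n ^ 2 - mm * t * n) := by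
  nlinarith [sq_nonneg (t - d * mm * n),
    mul_nonneg (mul_nonneg hd.le (sub_nonneg.2 hda)) (sq_nonneg n)]

set_option maxHeartbeats 1000000 in
theorem exists_delta_coercive (N : ℕ) (hN : 2 ≤ N) (f : Fin N → ℝ) (hf : ∀ n, 0 < f n)
    (hC : min (kappa0 N f) 1 > betaf N f) (ε : ℝ) (hε : 0 < ε) :
    ∃ δ : ℝ, δ ∈ Set.Ioo (0 : ℝ) 1 ∧
      ∃ κ : ℝ, 0 < κ ∧ ∀ u X : Fin N → ℝ, (∀ n, 0 ≤ u n) →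
        X ⬝ᵥ (((Jmat N + δ • (1 : Matrix (Fin N) (Fin N) ℝ)) * Amat N f ε u) *ᵥ X) ≥
          κ * ∑ n, (X n) ^ 2 := by
  have hNe : Nonempty (Fin N) := ⟨⟨0, by omega⟩⟩
  obtain ⟨n₀, hn₀⟩ := Finite.exists_min f
  obtain ⟨n₁, hn₁⟩ := Finite.exists_max f
  set m := fmin N f with hm_def
  set Mx := fmax N f with hMx_def
  have hm_eq : m = f n₀ :=
    le_antisymm (ciInf_le (Set.Finite.bddBelow (Set.finite_range f)) n₀) (le_ciInf hn₀)
  have hMx_eq : Mx = f n₁ :=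
    le_antisymm (ciSup_le hn₁) (le_ciSup (Set.Finite.bddAbove (Set.finite_range f)) n₁)
  have hm0 : 0 < m := hm_eq ▸ hf n₀
  have hmle : ∀ n, m ≤ f n := fun n => hm_eq ▸ hn₀ n
  have hMxle : ∀ n, f n ≤ Mx := fun n => hMx_eq ▸ hn₁ n
  have hMx0 : 0 < Mx := lt_of_lt_of_le hm0 (le_trans (hmle n₀) (hMxle n₀))
  set σ := Real.sqrt (∑ n, (f n - fbar N f) ^ 2) with hσ_def
  have hσ0 : 0 ≤ σ := Real.sqrt_nonneg _
  have hβ : betaf N f < 1 := lt_of_lt_of_le hC (min_le_right _ _)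
  have hβ' : (Mx - m) / m + (1 / m) * σ < 1 := by rw [betaf] at hβ; exact hβ
  have hσkey : σ < 2 * m - Mx := by
    have h4 : Mx - m + σ = m * ((Mx - m) / m + (1 / m) * σ) := by field_simp
    have h5 := mul_lt_mul_of_pos_left hβ' hm0
    linarith [h4, h5]
  set fb := fbar N f with hfb_def
  have hfb0 : 0 < fb := by
    rw [hfb_def, fbar]
    have hsum : 0 < ∑ n, f n := Finset.sum_pos (fun n _ => hf n) ⟨n₀, Finset.mem_univ n₀⟩
    positivity
  set α := m / Mx - σ / m with hα_def
  have hα0 : 0 < α := by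
    rw [hα_def, sub_pos, div_lt_div_iff₀ hm0 hMx0]
    have h6 := mul_lt_mul_of_pos_right hσkey hMx0
    linarith [h6, sq_nonneg (m - Mx)]
  set M := 1 + fb / m with hM_def
  have hM0 : 0 < M := by positivity
  set δ := min (1 / 2 : ℝ) (α / M ^ 2) with hδ_def
  have hδ0 : 0 < δ := lt_min (by norm_num) (by positivity)
  have hδ1 : δ < 1 := lt_of_le_of_lt (min_le_left _ _) (by norm_num)
  have hδα : δ * M ^ 2 ≤ α := by
    have h1 : δ ≤ α / M ^ 2 := min_le_right _ _
    calc δ * M ^ 2 ≤ (α / M ^ 2) * M ^ 2 := mul_le_mul_of_nonneg_right h1 (sq_nonneg M)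
      _ = α := by field_simp
  refine ⟨δ, ⟨hδ0, hδ1⟩, δ * α / 2, by positivity, fun u X hu => ?_⟩
  -- notation
  have hF0 : 0 ≤ ∑ l, f l * u l :=
    Finset.sum_nonneg fun l _ => mul_nonneg (hf l).le (hu l)
  have hS : 0 < ε + ∑ l, f l * u l := by linarith
  have hU0 : 0 ≤ ∑ l, u l := Finset.sum_nonneg fun l _ => hu l
  set S := ε + ∑ l, f l * u l with hS_def
  set U := (∑ l, u l) with hU_def
  set F := (∑ l, f l * u l) with hF_def
  set Y := (∑ k, X k) with hY_def
  set W := (∑ k, f k * X k) with hW_def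
  set NX := Real.sqrt (∑ n, X n ^ 2) with hNX_def
  have hNX0 : 0 ≤ NX := Real.sqrt_nonneg _
  have hNX2 : NX ^ 2 = ∑ n, X n ^ 2 :=
    Real.sq_sqrt (Finset.sum_nonneg fun n _ => sq_nonneg _)
  have hXle : ∀ n, |X n| ≤ NX := by
    intro n
    rw [hNX_def, ← Real.sqrt_sq_eq_abs]
    exact Real.sqrt_le_sqrt (Finset.single_le_sum (fun i _ => sq_nonneg (X i))
      (Finset.mem_univ n))
  -- matrix algebra
  have hM1 : (Jmat N + δ • (1 : Matrix (Fin N) (Fin N) ℝ)) * Amat N f ε u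
      = Jmat N + δ • Amat N f ε u := by
    rw [Matrix.add_mul, Matrix.smul_mul, Matrix.one_mul]
    congr 1
    ext i k
    simp only [Matrix.mul_apply, Jmat, Matrix.of_apply, one_mul]
    exact colsum N f ε u hS.ne' k
  have hLHS : X ⬝ᵥ (((Jmat N + δ • (1 : Matrix (Fin N) (Fin N) ℝ)) * Amat N f ε u) *ᵥ X)
      = Y ^ 2 + δ * (X ⬝ᵥ (Amat N f ε u *ᵥ X)) := by
    rw [hM1, Matrix.add_mulVec, Matrix.smul_mulVec, dotProduct_add,
      dotProduct_smul, smul_eq_mul]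
    congr 1
    simp only [Matrix.mulVec, dotProduct, Jmat, Matrix.of_apply, one_mul]
    rw [← Finset.sum_mul, ← hY_def]
    ring
  -- quadratic form bounds
  set QF := X ⬝ᵥ (Amat N f ε u *ᵥ X) with hQF_def
  set P := (∑ n, u n * f n * X n) with hP_def
  set Q := (∑ n, u n * (ε + f n * U) * X n) with hQ_def
  have hqf : QF = (∑ n, Bv N f ε u n * X n ^ 2) + Y * P / S - W * Q / S ^ 2 :=
    qf_eq N f ε u X hS.ne'
  have hmM : m ≤ Mx := le_trans (hmle n₀) (hMxle n₀)
  have hB : ∀ n, m / Mx ≤ Bv N f ε u n := by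
    intro n
    rw [Bv, div_le_div_iff₀ hMx0 hS, ← hU_def]
    have h1 : F ≤ Mx * U := by
      rw [hF_def, hU_def, Finset.mul_sum]
      exact Finset.sum_le_sum fun l _ =>
        mul_le_mul_of_nonneg_right (hMxle l) (hu l)
    have e1 : m * F ≤ Mx * (f n * U) := by
      calc m * F ≤ m * (Mx * U) := mul_le_mul_of_nonneg_left h1 hm0.le
        _ = Mx * (m * U) := by ring
        _ ≤ Mx * (f n * U) :=
            mul_le_mul_of_nonneg_left (mul_le_mul_of_nonneg_right (hmle n) hU0) hMx0.le
    have e2 : m * ε ≤ Mx * ε := mul_le_mul_of_nonneg_right hmM hε.le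
    rw [hS_def]
    linarith [e1, e2]
  have hsum1 : m / Mx * NX ^ 2 ≤ ∑ n, Bv N f ε u n * X n ^ 2 := by
    rw [hNX2, Finset.mul_sum]
    exact Finset.sum_le_sum fun n _ => mul_le_mul_of_nonneg_right (hB n) (sq_nonneg _)
  have habsP : |P| ≤ F * NX := by
    calc |P| ≤ ∑ n, |u n * f n * X n| := Finset.abs_sum_le_sum_abs _ _
      _ ≤ ∑ n, f n * u n * NX := by
          refine Finset.sum_le_sum fun n _ => ?_
          rw [abs_mul, abs_mul, abs_of_nonneg (hu n), abs_of_nonneg (hf n).le]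
          calc u n * f n * |X n| = f n * u n * |X n| := by ring
            _ ≤ f n * u n * NX :=
                mul_le_mul_of_nonneg_left (hXle n) (mul_nonneg (hf n).le (hu n))
      _ = F * NX := by rw [hF_def, ← Finset.sum_mul]
  have habsQ : |Q| ≤ U * S * NX := by
    have h2 : (∑ n, u n * (ε + f n * U) * NX) = U * S * NX := by
      rw [← Finset.sum_mul]
      congr 1
      have : ∀ n : Fin N, u n * (ε + f n * U) = ε * u n + (f n * u n) * U := fun n => by ring
      rw [Finset.sum_congr rfl fun n _ => this n, Finset.sum_add_distrib, ← Finset.mul_sum,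
        ← Finset.sum_mul, hS_def]
      ring
    calc |Q| ≤ ∑ n, |u n * (ε + f n * U) * X n| := Finset.abs_sum_le_sum_abs _ _
      _ ≤ ∑ n, u n * (ε + f n * U) * NX := by
          refine Finset.sum_le_sum fun n _ => ?_
          have hnn : 0 ≤ u n * (ε + f n * U) :=
            mul_nonneg (hu n) (add_nonneg hε.le (mul_nonneg (hf n).le hU0))
          rw [abs_mul, abs_of_nonneg hnn]
          exact mul_le_mul_of_nonneg_left (hXle n) hnn
      _ = U * S * NX := h2
  have habsW : |W| ≤ fb * |Y| + σ * NX := by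
    have hW' : W = fb * Y + ∑ k, (f k - fb) * X k := by
      rw [hW_def, hY_def, Finset.mul_sum, ← Finset.sum_add_distrib]
      exact Finset.sum_congr rfl fun k _ => by ring
    have hCS : |∑ k, (f k - fb) * X k| ≤ σ * NX := by
      rw [abs_le]
      constructor
      · have := Real.sum_mul_le_sqrt_mul_sqrt Finset.univ (fun k => -(f k - fb)) X
        simp only [neg_mul, Finset.sum_neg_distrib, neg_sq] at this
        rw [hσ_def, hNX_def]
        linarith
      · have := Real.sum_mul_le_sqrt_mul_sqrt Finset.univ (fun k => f k - fb) X
        rw [hσ_def, hNX_def]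
        linarith
    calc |W| ≤ |fb * Y| + |∑ k, (f k - fb) * X k| := hW' ▸ abs_add_le _ _
      _ ≤ fb * |Y| + σ * NX := by
          rw [abs_mul, abs_of_nonneg hfb0.le]
          linarith
  -- bound the cross terms
  have hFS : F ≤ S := by rw [hS_def]; linarith
  have hUS : m * U ≤ S := by
    have : m * U ≤ F := by
      rw [hF_def, hU_def, Finset.mul_sum]
      exact Finset.sum_le_sum fun l _ => mul_le_mul_of_nonneg_right (hmle l) (hu l)
    linarith
  have hcross1 : -( |Y| * NX) ≤ Y * P / S := by
    have h1 : |Y * P / S| ≤ |Y| * NX := by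
      rw [abs_div, abs_of_pos hS, abs_mul, div_le_iff₀ hS]
      calc |Y| * |P| ≤ |Y| * (F * NX) := mul_le_mul_of_nonneg_left habsP (abs_nonneg Y)
        _ = (|Y| * NX) * F := by ring
        _ ≤ (|Y| * NX) * S := mul_le_mul_of_nonneg_left hFS (mul_nonneg (abs_nonneg Y) hNX0)
        _ = |Y| * NX * S := by ring
    linarith [neg_abs_le (Y * P / S)]
  have hcross2 : -((fb * |Y| + σ * NX) * NX / m) ≤ -(W * Q / S ^ 2) := by
    have h1 : |W * Q / S ^ 2| ≤ (fb * |Y| + σ * NX) * NX / m := by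
      rw [abs_div, abs_of_pos (pow_pos hS 2), abs_mul, div_le_div_iff₀ (pow_pos hS 2) hm0]
      have hWnn : 0 ≤ fb * |Y| + σ * NX := by positivity
      have h2 : |W| * |Q| ≤ (fb * |Y| + σ * NX) * (U * S * NX) :=
        mul_le_mul habsW habsQ (abs_nonneg Q) hWnn
      calc |W| * |Q| * m ≤ (fb * |Y| + σ * NX) * (U * S * NX) * m :=
            mul_le_mul_of_nonneg_right h2 hm0.le
        _ = ((fb * |Y| + σ * NX) * NX) * (m * U * S) := by ring
        _ ≤ ((fb * |Y| + σ * NX) * NX) * (S * S) := by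
            refine mul_le_mul_of_nonneg_left ?_ (mul_nonneg hWnn hNX0)
            exact mul_le_mul_of_nonneg_right hUS hS.le
        _ = (fb * |Y| + σ * NX) * NX * S ^ 2 := by ring
    linarith [le_abs_self (W * Q / S ^ 2)]
  have hQFlb : α * NX ^ 2 - M * |Y| * NX ≤ QF := by
    rw [hqf]
    have expand : α * NX ^ 2 - M * |Y| * NX
        = m / Mx * NX ^ 2 - (|Y| * NX) - (fb * |Y| + σ * NX) * NX / m := by
      rw [hα_def, hM_def]
      field_simp
      ring
    rw [expand]
    have := hsum1
    linarith
  -- conclude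
  rw [hLHS, ← hNX2]
  have ht2 : Y ^ 2 = |Y| ^ 2 := (sq_abs Y).symm
  have hfinal : δ * α / 2 * NX ^ 2 ≤ |Y| ^ 2 + δ * (α * NX ^ 2 - M * |Y| * NX) :=
    quad_aux (|Y|) NX δ α M (abs_nonneg Y) hNX0 hδ0 hδα
  have h7 : δ * (α * NX ^ 2 - M * |Y| * NX) ≤ δ * QF :=
    mul_le_mul_of_nonneg_left hQFlb hδ0.le
  clear_value m Mx σ fb α M δ S U F Y W NX QF P Q
  linarith [hfinal, h7, ht2]
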